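/- arXiv:2301.12014 — 2 statements merged into one kernel-verified Lean document; each statement's English description precedes it below -/
import Mathlib

section
/- Let T be a well-founded tree and (n_i)_{i<ω} a strictly increasing sequence of natural numbers. Then ω(ρ(T)) ≤ ρ(T|(n_i)) ≤ ρ(T). In particular, if ρ(T) is a limit ordinal, then ρ(T|(n_i)) = ρ(T). -/
noncomputable section

/-- `omegaPart a` is ω(a): the largest limit ordinal `≤ a`, or `0` if there is none. -/
def omegaPart (a : Ordinal) : Ordinal :=
  sSup {b : Ordinal | (b = 0 ∨ Order.IsSuccLimit b) ∧ b ≤ a}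

/-- `IsTree lt` says that the binary relation `lt` on `T` is a tree order: it is irreflexive,
transitive, and the set of predecessors of any node is finite and linearly ordered. -/
def IsTree {T : Type*} (lt : T → T → Prop) : Prop :=
  (∀ s, ¬ lt s s) ∧
  (∀ s t u, lt s t → lt t u → lt s u) ∧
  (∀ s, {t | lt t s}.Finite) ∧
  (∀ s t u, lt t s → lt u s → t = u ∨ lt t u ∨ lt u t)

/-- The length `lh s` of a node of a tree: the number of its strict predecessors. -/
def lh {T : Type*} (lt : T → T → Prop) (s : T) : ℕ :=
  Nat.card {t | lt t s}

/-- The rank `ρ(T)` of a tree `(T, lt)`: for a well-founded tree it is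
`sup { ρ_T(s) + 1 : s ∈ T }` where `ρ_T(s) = sup { ρ_T(t) + 1 : s < t }`;
for an ill-founded tree we use the junk value `0`. -/
def rhoRel {T : Type u} (lt : T → T → Prop) : Ordinal.{u} :=
  letI := Classical.dec (WellFounded (Function.swap lt))
  if h : WellFounded (Function.swap lt) then ⨆ s : T, Order.succ (h.apply s).rank else 0

/-- The nodes of the tree `T_ℰ^X` associated to a sequence `E` of (equivalence) relations
on `X`: pairs `(n, C)` where `C` is a non-singleton class `[x]_{E n}`. -/
def TreeNode (X : Type u) (E : ℕ → X → X → Prop) : Type u :=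
  {p : ℕ × Set X // ∃ x : X, p.2 = {y | E p.1 x y} ∧ p.2 ≠ {x}}

/-- The tree order on `T_ℰ^X`: `(n, C) < (m, D)` iff `n < m` and `C ⊇ D`. -/
def nodeLT {X : Type u} (E : ℕ → X → X → Prop) :
    TreeNode X E → TreeNode X E → Prop :=
  fun s t => s.1.1 < t.1.1 ∧ t.1.2 ⊆ s.1.2

/-- The tree `T_ℰ^X` is well-founded: no infinite strictly increasing sequence. -/
def TreeWF (X : Type u) (E : ℕ → X → X → Prop) : Prop :=
  WellFounded (Function.swap (nodeLT E))

/-- The rank `ρ(T_ℰ^X)`. -/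
def treeRho (X : Type u) (E : ℕ → X → X → Prop) : Ordinal.{u} :=
  rhoRel (nodeLT E)

/-- A Polish group: a topological group whose topology is Polish. -/
def IsPolishGroup (G : Type u) [Group G] [TopologicalSpace G] : Prop :=
  IsTopologicalGroup G ∧ PolishSpace G

/-- A topological group is non-archimedean if the open subgroups form a
neighborhood base of the identity. -/
def IsNonArch (G : Type u) [Group G] [TopologicalSpace G] : Prop :=
  ∀ U ∈ nhds (1 : G), ∃ H : Subgroup G, IsOpen (H : Set G) ∧ (H : Set G) ⊆ U

/-- A topological group is CLI if it admits a compatible complete left-invariant metric. -/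
def IsCLI (G : Type u) [Group G] [TopologicalSpace G] : Prop :=
  ∃ m : MetricSpace G,
    m.toUniformSpace.toTopologicalSpace = ‹TopologicalSpace G› ∧
    @CompleteSpace G m.toUniformSpace ∧
    ∀ g h k : G, m.dist (g * h) (g * k) = m.dist h k

/-- A topological group is TSI if it admits a compatible complete two-sided-invariant metric. -/
def IsTSI (G : Type u) [Group G] [TopologicalSpace G] : Prop :=
  ∃ m : MetricSpace G,
    m.toUniformSpace.toTopologicalSpace = ‹TopologicalSpace G› ∧
    @CompleteSpace G m.toUniformSpace ∧
    ∀ g h k : G, m.dist (g * h) (g * k) = m.dist h k ∧ m.dist (h * g) (k * g) = m.dist h k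

/-- `Dgnb G` is the set `dgnb(G)`: decreasing sequences `(G_n)` of open subgroups of `G`
with `G_0 = G` forming a neighborhood base of `1_G`. -/
structure Dgnb (G : Type u) [Group G] [TopologicalSpace G] where
  seq : ℕ → Subgroup G
  isOpen : ∀ n, IsOpen ((seq n : Set G))
  antitone : ∀ n, seq (n + 1) ≤ seq n
  zero_eq_top : seq 0 = ⊤
  basis : ∀ U ∈ nhds (1 : G), ∃ n, ((seq n : Set G)) ⊆ U

/-- The orbit equivalence relation of (the action of) a subgroup `H ≤ G` on a `G`-space `X`:
`x ∼ y` iff `g • x = y` for some `g ∈ H`. -/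
def subOrbit {G : Type u} [Group G] (H : Subgroup G) (X : Type v) [MulAction G X] :
    X → X → Prop :=
  fun x y => ∃ g ∈ H, g • x = y

/-- The tree `T_𝒢^X` of a `𝒢 ∈ dgnb(G)` and a `G`-space `X`: nodes are pairs `(n, C)`
with `C` a non-singleton `G_n`-orbit. We record it by its defining sequence of relations. -/
def dgnbRel {G : Type u} [Group G] [TopologicalSpace G] (𝒢 : Dgnb G) (X : Type v)
    [MulAction G X] : ℕ → X → X → Prop :=
  fun n => subOrbit (𝒢.seq n) X

/-- `ρ^k(𝒢) = ρ(T_𝒢^{G/G_k})`, where `G` acts by left translation on `G/G_k`. -/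
def rhoK {G : Type u} [Group G] [TopologicalSpace G] (𝒢 : Dgnb G) (k : ℕ) : Ordinal.{u} :=
  treeRho (G ⧸ 𝒢.seq k) (dgnbRel 𝒢 (G ⧸ 𝒢.seq k))

/-- `ρ(𝒢) = ρ(T_𝒢^{X(𝒢)})` where `X(𝒢) = ⊔_k G/G_k` is the disjoint union of the coset
spaces, with `G` acting by left translation on each summand. -/
def rhoDgnb {G : Type u} [Group G] [TopologicalSpace G] (𝒢 : Dgnb G) : Ordinal.{u} :=
  treeRho (Σ k : ℕ, G ⧸ 𝒢.seq k)
    (fun n p q => ∃ g ∈ 𝒢.seq n, q = ⟨p.1, g • p.2⟩)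

/-- `G` is α-CLI if `ρ(𝒢) ≤ ω·α` for any (equivalently, some) `𝒢 ∈ dgnb(G)`. -/
def IsAlphaCLI (G : Type u) [Group G] [TopologicalSpace G] (α : Ordinal.{u}) : Prop :=
  ∀ 𝒢 : Dgnb G, rhoDgnb 𝒢 ≤ Ordinal.omega0 * α

/-- `G` is L-α-CLI if `rank(G) ≤ α`, i.e. `ω(ρ(𝒢)) ≤ ω·α` for any (equivalently, some)
`𝒢 ∈ dgnb(G)`. -/
def IsLAlphaCLI (G : Type u) [Group G] [TopologicalSpace G] (α : Ordinal.{u}) : Prop :=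
  ∀ 𝒢 : Dgnb G, omegaPart (rhoDgnb 𝒢) ≤ Ordinal.omega0 * α


set_option linter.deprecated false
set_option maxHeartbeats 1000000

section TreeAux
open Ordinal
variable {T : Type} {lt : T → T → Prop} {n : ℕ → ℕ}

theorem lh_lt_lh (htree : IsTree lt) {a b : T} (h : lt a b) : lh lt a < lh lt b := by
  have hsub : {t | lt t a} ⊂ {t | lt t b} := by
    constructor
    · intro t ht; exact htree.2.1 t a b ht h
    · intro hba
      exact htree.1 a (hba h)
  exact Set.ncard_lt_ncard hsub (htree.2.2.1 b)

theorem pred_compare (htree : IsTree lt) {a b w : T} (ha : lt a w) (hb : lt b w)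
    (hab : lh lt a ≤ lh lt b) : a = b ∨ lt a b := by
  rcases htree.2.2.2 w a b ha hb with h | h | h
  · exact Or.inl h
  · exact Or.inr h
  · exact absurd (lh_lt_lh htree h) (by omega)

theorem exists_pred_level (htree : IsTree lt) (w : T) {ℓ : ℕ} (hℓ : ℓ < lh lt w) :
    ∃ v, lt v w ∧ lh lt v = ℓ := by
  classical
  have hfin := htree.2.2.1 w
  set F := hfin.toFinset with hF
  have hmemF : ∀ v, v ∈ F ↔ lt v w := by intro v; simp [hF, Set.Finite.mem_toFinset]
  have hcard : F.card = lh lt w := by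
    rw [lh, Nat.card_eq_card_finite_toFinset hfin]
  have hinj : Set.InjOn (lh lt) F := by
    intro a haF b hbF hab
    rcases htree.2.2.2 w a b ((hmemF a).1 haF) ((hmemF b).1 hbF) with h | h | h
    · exact h
    · exact absurd (lh_lt_lh htree h) (by omega)
    · exact absurd (lh_lt_lh htree h) (by omega)
  have hsub : F.image (lh lt) ⊆ Finset.range (lh lt w) := by
    intro ℓ' hℓ'
    rcases Finset.mem_image.1 hℓ' with ⟨v, hvF, rfl⟩
    exact Finset.mem_range.2 (lh_lt_lh htree ((hmemF v).1 hvF))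
  have hcard2 : (Finset.range (lh lt w)).card ≤ (F.image (lh lt)).card := by
    rw [Finset.card_image_of_injOn hinj, hcard, Finset.card_range]
  have heq := Finset.eq_of_subset_of_card_le hsub hcard2
  have : ℓ ∈ F.image (lh lt) := by rw [heq]; exact Finset.mem_range.2 hℓ
  rcases Finset.mem_image.1 this with ⟨v, hvF, hv⟩
  exact ⟨v, (hmemF v).1 hvF, hv⟩

variable (lt n) in
/-- The level-subtree as a subtype. -/
def SSub : Type := {x : T // ∃ i, lh lt x = n i}

variable (lt n) in
def ltS : SSub lt n → SSub lt n → Prop := fun s t => lt s.1 t.1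

variable (lt n) in
theorem wfS (hwf : WellFounded (Function.swap lt)) :
    WellFounded (Function.swap (ltS lt n)) :=
  InvImage.wf Subtype.val hwf

variable (lt n) in
def rkS (hwf : WellFounded (Function.swap lt)) : SSub lt n → Ordinal :=
  fun s => ((wfS lt n hwf).apply s).rank

variable (lt n) in
def sigF (hwf : WellFounded (Function.swap lt)) (u : T) : Ordinal :=
  ⨆ p : {s : SSub lt n // u = s.1 ∨ lt u s.1}, Order.succ (rkS lt n hwf p.1)

variable (lt n) in
def lamF (hwf : WellFounded (Function.swap lt)) (u : T) : Ordinal :=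
  Ordinal.omega0 * (sigF lt n hwf u / Ordinal.omega0)

theorem ex_mod_nat (a : Ordinal) : ∃ m : ℕ, a % Ordinal.omega0 = m :=
  Ordinal.lt_omega0.1 (Ordinal.mod_lt a Ordinal.omega0_ne_zero)

variable (lt n) in
def muF (hwf : WellFounded (Function.swap lt)) (u : T) : ℕ :=
  Classical.choose (ex_mod_nat (sigF lt n hwf u))

variable (lt n) in
def kuF (hmono : StrictMono n) (u : T) : ℕ :=
  Nat.find (⟨lh lt u, hmono.le_apply⟩ : ∃ k, lh lt u ≤ n k)

variable (lt n) in
def rhoS (hwf : WellFounded (Function.swap lt)) : Ordinal :=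
  ⨆ s : SSub lt n, Order.succ (rkS lt n hwf s)

variable (lt n) in
def rhoT (hwf : WellFounded (Function.swap lt)) : Ordinal :=
  ⨆ u : T, Order.succ ((hwf.apply u).rank)

theorem sig_eq (hwf : WellFounded (Function.swap lt)) (u : T) : sigF lt n hwf u = lamF lt n hwf u + (muF lt n hwf u : Ordinal) := by
  rw [lamF]
  conv_lhs => rw [← Ordinal.div_add_mod (sigF lt n hwf u) Ordinal.omega0]
  rw [Classical.choose_spec (ex_mod_nat (sigF lt n hwf u))]
  rfl

theorem ku_spec (hmono : StrictMono n) (u : T) : lh lt u ≤ n (kuF lt n hmono u) :=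
  Nat.find_spec (⟨lh lt u, hmono.le_apply⟩ : ∃ k, lh lt u ≤ n k)

theorem ku_min (hmono : StrictMono n) (u : T) {m : ℕ} (hm : m < kuF lt n hmono u) : n m < lh lt u :=
  lt_of_not_ge (Nat.find_min (⟨lh lt u, hmono.le_apply⟩ : ∃ k, lh lt u ≤ n k) hm)

theorem sig_le_rhoS (hwf : WellFounded (Function.swap lt)) (u : T) : sigF lt n hwf u ≤ rhoS lt n hwf :=
  Ordinal.iSup_le fun p => Ordinal.le_iSup (fun s : SSub lt n => Order.succ (rkS lt n hwf s)) p.1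

theorem sig_mono (htree : IsTree lt) (hwf : WellFounded (Function.swap lt)) {u w : T} (huw : lt u w) : sigF lt n hwf w ≤ sigF lt n hwf u := by
  refine Ordinal.iSup_le fun p => ?_
  have hcond : u = p.1.1 ∨ lt u p.1.1 := by
    rcases p.2 with h | h
    · exact Or.inr (h ▸ huw)
    · exact Or.inr (htree.2.1 _ _ _ huw h)
  exact Ordinal.le_iSup
    (fun q : {s : SSub lt n // u = s.1 ∨ lt u s.1} => Order.succ (rkS lt n hwf q.1)) ⟨p.1, hcond⟩

theorem div_omega_mono {a b : Ordinal} (h : a ≤ b) :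
    a / Ordinal.omega0 ≤ b / Ordinal.omega0 := by
  rw [Ordinal.le_div Ordinal.omega0_ne_zero]
  exact (Ordinal.mul_div_le a Ordinal.omega0).trans h

theorem lam_mono (hwf : WellFounded (Function.swap lt)) {u w : T} (h : sigF lt n hwf w ≤ sigF lt n hwf u) :
    lamF lt n hwf w ≤ lamF lt n hwf u :=
  mul_le_mul_right (div_omega_mono h) _

theorem lam_step (hwf : WellFounded (Function.swap lt)) {u w : T} (h : lamF lt n hwf w < lamF lt n hwf u) :
    lamF lt n hwf w + Ordinal.omega0 ≤ lamF lt n hwf u := by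
  rw [lamF] at h ⊢
  have hq : sigF lt n hwf w / Ordinal.omega0 < sigF lt n hwf u / Ordinal.omega0 :=
    (mul_lt_mul_iff_right₀ Ordinal.omega0_pos).1 h
  have h1 : sigF lt n hwf w / Ordinal.omega0 + 1 ≤ sigF lt n hwf u / Ordinal.omega0 := by
    rw [Ordinal.add_one_eq_succ]
    exact Order.succ_le_of_lt hq
  calc Ordinal.omega0 * (sigF lt n hwf w / Ordinal.omega0) + Ordinal.omega0
      = Ordinal.omega0 * (sigF lt n hwf w / Ordinal.omega0 + 1) := by rw [mul_add_one]
    _ ≤ _ := mul_le_mul_right h1 _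

/-- The ladder lemma: below any node `w` with `n (a + d) < lh w` there is an `S`-node `v`
at level `n a` whose `S`-rank is at least `σ(w) + d`. -/
theorem ladder (htree : IsTree lt) (hwf : WellFounded (Function.swap lt)) (hmono : StrictMono n) : ∀ (d a : ℕ) (w : T), n (a + d) < lh lt w →
    ∃ v : SSub lt n, lt v.1 w ∧ lh lt v.1 = n a ∧
      sigF lt n hwf w + (d : Ordinal) ≤ rkS lt n hwf v := by
  intro d
  induction d with
  | zero =>
    intro a w hlt
    rw [Nat.add_zero] at hlt
    obtain ⟨v, hvw, hvl⟩ := exists_pred_level htree w hlt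
    refine ⟨⟨v, a, hvl⟩, hvw, hvl, ?_⟩
    rw [Nat.cast_zero, add_zero]
    refine Ordinal.iSup_le fun p => ?_
    have hrel : lt v p.1.1 := by
      rcases p.2 with h | h
      · exact h ▸ hvw
      · exact htree.2.1 _ _ _ hvw h
    exact Order.succ_le_of_lt
      (((wfS lt n hwf).apply _).rank_lt_of_rel (show Function.swap (ltS lt n) p.1 ⟨v, a, hvl⟩ from hrel))
  | succ d ih =>
    intro a w hlt
    have h1 : n ((a + 1) + d) < lh lt w := by
      rw [show (a + 1) + d = a + (d + 1) by omega]; exact hlt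
    obtain ⟨v', hv'w, hv'l, hv'r⟩ := ih (a + 1) w h1
    have hna : n a < lh lt w :=
      lt_trans (hmono (show a < a + (d + 1) by omega)) hlt
    obtain ⟨v, hvw, hvl⟩ := exists_pred_level htree w hna
    have hcomp := pred_compare htree hvw hv'w
      (by rw [hvl, hv'l]; exact (hmono (show a < a + 1 by omega)).le)
    have hvv' : lt v v'.1 := by
      rcases hcomp with h | h
      · exfalso
        have h2 := hmono (show a < a + 1 by omega)
        rw [← hvl, ← hv'l, h] at h2
        exact lt_irrefl _ h2
      · exact h
    refine ⟨⟨v, a, hvl⟩, hvw, hvl, ?_⟩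
    have hlt2 : rkS lt n hwf v' < rkS lt n hwf ⟨v, a, hvl⟩ :=
      ((wfS lt n hwf).apply _).rank_lt_of_rel (show Function.swap (ltS lt n) v' ⟨v, a, hvl⟩ from hvv')
    calc sigF lt n hwf w + ((d + 1 : ℕ) : Ordinal)
        = (sigF lt n hwf w + (d : Ordinal)) + 1 := by push_cast; rw [add_assoc]
      _ ≤ rkS lt n hwf v' + 1 := add_le_add_left hv'r 1
      _ = Order.succ (rkS lt n hwf v') := Ordinal.add_one_eq_succ _
      _ ≤ rkS lt n hwf ⟨v, a, hvl⟩ := Order.succ_le_of_lt hlt2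

/-- Claim M: the main pointwise upper bound on the rank in `T`. -/
theorem claimM (htree : IsTree lt) (hwf : WellFounded (Function.swap lt)) (hmono : StrictMono n) : ∀ u : T, (hwf.apply u).rank ≤
    lamF lt n hwf u + ((n (kuF lt n hmono u + muF lt n hwf u) - lh lt u : ℕ) : Ordinal) := by
  intro u
  refine hwf.induction (C := fun u => (hwf.apply u).rank ≤
    lamF lt n hwf u + ((n (kuF lt n hmono u + muF lt n hwf u) - lh lt u : ℕ) : Ordinal))
    u fun x ih => ?_
  rw [Acc.rank_eq]
  refine Ordinal.iSup_le fun b => ?_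
  obtain ⟨w, hxw⟩ := b
  have hxw' : lt x w := hxw
  show Order.succ ((hwf.apply w).rank) ≤ _
  have ihw := ih w hxw'
  have hsm : sigF lt n hwf w ≤ sigF lt n hwf x := sig_mono htree hwf hxw'
  rcases lt_or_eq_of_le (lam_mono hwf hsm) with hlam | hlam
  · -- lam w < lam x : everything below lam x
    have hstep := lam_step hwf hlam
    have hr : (hwf.apply w).rank < lamF lt n hwf x := by
      calc (hwf.apply w).rank ≤ lamF lt n hwf w + _ := ihw
        _ < lamF lt n hwf w + Ordinal.omega0 :=
          add_lt_add_right (Ordinal.nat_lt_omega0 _) _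
        _ ≤ lamF lt n hwf x := hstep
    exact (Order.succ_le_of_lt hr).trans (le_self_add)
  · -- lam w = lam x
    have hmuw : muF lt n hwf w ≤ muF lt n hwf x := by
      have h1 := hsm
      rw [sig_eq hwf w, sig_eq hwf x, hlam, add_le_add_iff_left, Nat.cast_le] at h1
      exact h1
    by_cases hk : kuF lt n hmono w + muF lt n hwf w ≤ kuF lt n hmono x + muF lt n hwf x
    · -- index comparison fine : finite part decreases
      have hlh : lh lt x < lh lt w := lh_lt_lh htree hxw'
      have hlhw : lh lt w ≤ n (kuF lt n hmono w + muF lt n hwf w) :=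
        (ku_spec hmono w).trans (hmono.monotone (by omega))
      have hnn : n (kuF lt n hmono w + muF lt n hwf w) ≤
          n (kuF lt n hmono x + muF lt n hwf x) := hmono.monotone hk
      have hnat : (n (kuF lt n hmono w + muF lt n hwf w) - lh lt w) + 1 ≤
          n (kuF lt n hmono x + muF lt n hwf x) - lh lt x := by omega
      calc Order.succ ((hwf.apply w).rank) ≤ Order.succ (lamF lt n hwf w +
            ((n (kuF lt n hmono w + muF lt n hwf w) - lh lt w : ℕ) : Ordinal)) :=
            Order.succ_le_succ ihw
        _ = lamF lt n hwf w +
            (((n (kuF lt n hmono w + muF lt n hwf w) - lh lt w) + 1 : ℕ) : Ordinal) := by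
            rw [← Ordinal.add_one_eq_succ]; push_cast; rw [add_assoc]
        _ ≤ lamF lt n hwf x +
            ((n (kuF lt n hmono x + muF lt n hwf x) - lh lt x : ℕ) : Ordinal) := by
            rw [hlam]; exact add_le_add_right (Nat.cast_le.2 hnat) _
    · -- impossible case, via the ladder
      exfalso
      push_neg at hk
      have hkux : kuF lt n hmono x < kuF lt n hmono w := by omega
      set d := kuF lt n hmono w - 1 - kuF lt n hmono x with hd
      have hlad : n (kuF lt n hmono x + d) < lh lt w := by
        rw [show kuF lt n hmono x + d = kuF lt n hmono w - 1 by omega]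
        exact ku_min hmono w (by omega)
      obtain ⟨v, hvw, hvl, hvr⟩ := ladder htree hwf hmono d (kuF lt n hmono x) w hlad
      -- x ≤ v
      have hxl : lh lt x ≤ lh lt v.1 := by rw [hvl]; exact ku_spec hmono x
      have hxv : x = v.1 ∨ lt x v.1 := pred_compare htree hxw' hvw hxl
      have hsx : sigF lt n hwf w + ((d + 1 : ℕ) : Ordinal) ≤ sigF lt n hwf x := by
        calc sigF lt n hwf w + ((d + 1 : ℕ) : Ordinal)
            = (sigF lt n hwf w + (d : Ordinal)) + 1 := by push_cast; rw [add_assoc]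
          _ ≤ rkS lt n hwf v + 1 := add_le_add_left hvr 1
          _ = Order.succ (rkS lt n hwf v) := Ordinal.add_one_eq_succ _
          _ ≤ sigF lt n hwf x := Ordinal.le_iSup
              (fun q : {s : SSub lt n // x = s.1 ∨ lt x s.1} =>
                Order.succ (rkS lt n hwf q.1)) ⟨v, hxv⟩
      rw [sig_eq hwf w, sig_eq hwf x, hlam, add_assoc, add_le_add_iff_left,
        ← Nat.cast_add, Nat.cast_le] at hsx
      omega

theorem lemP (htree : IsTree lt) (hwf : WellFounded (Function.swap lt)) (hmono : StrictMono n) (u : T) (hku : 1 ≤ kuF lt n hmono u) :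
    sigF lt n hwf u + (kuF lt n hmono u : Ordinal) ≤ rhoS lt n hwf := by
  have hlad : n (0 + (kuF lt n hmono u - 1)) < lh lt u := by
    rw [Nat.zero_add]
    exact ku_min hmono u (by omega)
  obtain ⟨v, hvu, hvl, hvr⟩ := ladder htree hwf hmono (kuF lt n hmono u - 1) 0 u hlad
  calc sigF lt n hwf u + (kuF lt n hmono u : Ordinal)
      = (sigF lt n hwf u + ((kuF lt n hmono u - 1 : ℕ) : Ordinal)) + 1 := by
        have h9 : kuF lt n hmono u = (kuF lt n hmono u - 1) + 1 := by omega
        rw [h9]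
        push_cast
        rw [add_assoc]
    _ ≤ rkS lt n hwf v + 1 := add_le_add_left hvr 1
    _ = Order.succ (rkS lt n hwf v) := Ordinal.add_one_eq_succ _
    _ ≤ rhoS lt n hwf := Ordinal.le_iSup (fun s : SSub lt n => Order.succ (rkS lt n hwf s)) v

end TreeAux

theorem omega_mul_step {a c : Ordinal} (h : Ordinal.omega0 * a < Ordinal.omega0 * c) :
    Ordinal.omega0 * a + Ordinal.omega0 ≤ Ordinal.omega0 * c := by
  have hq : a < c := (mul_lt_mul_iff_right₀ Ordinal.omega0_pos).1 h
  have h1 : a + 1 ≤ c := by rw [Ordinal.add_one_eq_succ]; exact Order.succ_le_of_lt hq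
  calc Ordinal.omega0 * a + Ordinal.omega0 = Ordinal.omega0 * (a + 1) := by rw [mul_add_one]
    _ ≤ Ordinal.omega0 * c := mul_le_mul_right h1 _

theorem statement_13 (T : Type) (lt : T → T → Prop) (htree : IsTree lt)
    (hwf : WellFounded (Function.swap lt)) (n : ℕ → ℕ) (hmono : StrictMono n) :
    omegaPart (rhoRel lt) ≤
        rhoRel (fun s t : {x : T // ∃ i, lh lt x = n i} => lt s.1 t.1) ∧
    rhoRel (fun s t : {x : T // ∃ i, lh lt x = n i} => lt s.1 t.1) ≤ rhoRel lt ∧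
    (Order.IsSuccLimit (rhoRel lt) →
      rhoRel (fun s t : {x : T // ∃ i, lh lt x = n i} => lt s.1 t.1) = rhoRel lt) := by
  classical
  have hTeq : rhoRel lt = rhoT lt hwf := by
    unfold rhoRel rhoT
    rw [dif_pos hwf]
  have hSeq : rhoRel (fun s t : {x : T // ∃ i, lh lt x = n i} => lt s.1 t.1)
      = rhoS lt n hwf := by
    show rhoRel (ltS lt n) = rhoS lt n hwf
    unfold rhoRel rhoS rkS
    rw [dif_pos (wfS lt n hwf)]
  rw [hTeq, hSeq]
  -- Part 2 : ρ(S) ≤ ρ(T)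
  have hpt : ∀ x : SSub lt n, rkS lt n hwf x ≤ (hwf.apply x.1).rank := by
    intro x
    refine (wfS lt n hwf).induction
      (C := fun x => rkS lt n hwf x ≤ (hwf.apply x.1).rank) x fun y ih => ?_
    show ((wfS lt n hwf).apply y).rank ≤ _
    rw [Acc.rank_eq]
    refine Ordinal.iSup_le fun b => ?_
    have h1 : rkS lt n hwf b.1 ≤ (hwf.apply b.1.1).rank := ih b.1 b.2
    have h2 : (hwf.apply b.1.1).rank < (hwf.apply y.1).rank :=
      (hwf.apply _).rank_lt_of_rel (show Function.swap lt b.1.1 y.1 from b.2)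
    exact (Order.succ_le_succ h1).trans (Order.succ_le_of_lt h2)
  have part2 : rhoS lt n hwf ≤ rhoT lt hwf := by
    refine Ordinal.iSup_le fun s => ?_
    exact (Order.succ_le_succ (hpt s)).trans
      (Ordinal.le_iSup (fun u : T => Order.succ ((hwf.apply u).rank)) s.1)
  -- Part 1 : ω(ρ(T)) ≤ ρ(S)
  have part1 : omegaPart (rhoT lt hwf) ≤ rhoS lt n hwf := by
    refine csSup_le ⟨0, Or.inl rfl, zero_le⟩ fun b hb => ?_
    obtain ⟨hb1, hb2⟩ := hb
    rcases hb1 with rfl | hb1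
    · exact zero_le
    by_contra hcon
    have hSb : rhoS lt n hwf < b := lt_of_not_ge hcon
    obtain ⟨mS, hmS⟩ := ex_mod_nat (rhoS lt n hwf)
    set Λ : Ordinal := Ordinal.omega0 * (rhoS lt n hwf / Ordinal.omega0) with hΛ
    have hρS : Λ + (mS : Ordinal) = rhoS lt n hwf := by
      rw [hΛ, ← hmS, Ordinal.div_add_mod]
    have addnat : ∀ (c : Ordinal), c < b → ∀ j : ℕ, c + (j : Ordinal) < b := by
      intro c hc j
      induction j with
      | zero => simpa using hc
      | succ j hj =>
        have he : c + ((j + 1 : ℕ) : Ordinal) = Order.succ (c + (j : ℕ)) := by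
          push_cast
          rw [← add_assoc, Ordinal.add_one_eq_succ]
        rw [he]
        exact hb1.succ_lt hj
    set k : ℕ := n (mS + mS) + 1 with hk
    have hΛb : Λ < b :=
      lt_of_le_of_lt ((le_self_add : Λ ≤ Λ + (mS : Ordinal)).trans hρS.le) hSb
    have hβ : Λ + (k : Ordinal) < b := addnat Λ hΛb k
    have hex : ∃ u : T, Λ + (k : Ordinal) < Order.succ ((hwf.apply u).rank) := by
      by_contra h2
      push_neg at h2
      have h3 : rhoT lt hwf ≤ Λ + (k : Ordinal) := Ordinal.iSup_le h2
      exact absurd (hb2.trans h3) (not_le.2 hβ)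
    obtain ⟨u, hu⟩ := hex
    have hru : Λ + (k : Ordinal) ≤ (hwf.apply u).rank := Order.lt_succ_iff.1 hu
    have hsigle : sigF lt n hwf u ≤ rhoS lt n hwf := sig_le_rhoS hwf u
    have hlamle : lamF lt n hwf u ≤ Λ := mul_le_mul_right (div_omega_mono hsigle) _
    have hlameq : lamF lt n hwf u = Λ := by
      rcases eq_or_lt_of_le hlamle with h | h
      · exact h
      · exfalso
        have hstep : lamF lt n hwf u + Ordinal.omega0 ≤ Λ := omega_mul_step h
        have hr2 : (hwf.apply u).rank < Λ :=
          lt_of_le_of_lt (claimM htree hwf hmono u)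
            (lt_of_lt_of_le (add_lt_add_right (Ordinal.nat_lt_omega0 _) _) hstep)
        exact absurd (lt_of_le_of_lt hru hr2) (not_lt.2 (le_self_add))
    have hsig2 := sig_eq (n := n) hwf u
    have hmuS : muF lt n hwf u ≤ mS := by
      have h1 : lamF lt n hwf u + (muF lt n hwf u : Ordinal) ≤ Λ + (mS : Ordinal) := by
        rw [← hsig2, hρS]; exact hsigle
      rw [hlameq, add_le_add_iff_left, Nat.cast_le] at h1
      exact h1
    have hkuS : kuF lt n hmono u ≤ mS := by
      rcases Nat.eq_zero_or_pos (kuF lt n hmono u) with h0 | h0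
      · omega
      · have h1 := lemP htree hwf hmono u h0
        rw [hsig2, hlameq, ← hρS, add_assoc, add_le_add_iff_left,
          ← Nat.cast_add, Nat.cast_le] at h1
        omega
    have hfin : (k : Ordinal) ≤
        ((n (kuF lt n hmono u + muF lt n hwf u) - lh lt u : ℕ) : Ordinal) := by
      have h1 := hru.trans (claimM htree hwf hmono u)
      rw [hlameq] at h1
      exact (add_le_add_iff_left Λ).1 h1
    rw [Nat.cast_le] at hfin
    have hnk : n (kuF lt n hmono u + muF lt n hwf u) ≤ n (mS + mS) :=
      hmono.monotone (by omega)
    omega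
  refine ⟨part1, part2, fun hlim => ?_⟩
  have h1 : omegaPart (rhoT lt hwf) = rhoT lt hwf := by
    apply le_antisymm
    · exact csSup_le ⟨0, Or.inl rfl, zero_le⟩ fun b hb => hb.2
    · exact le_csSup ⟨rhoT lt hwf, fun b hb => hb.2⟩ ⟨Or.inr hlim, le_rfl⟩
  exact le_antisymm part2 (h1 ▸ part1)


end
end

section
/- Let X and Y be sets, let ℰ = (E_n) and ℱ = (F_n) be decreasing sequences of equivalence relations on X and Y respectively, and let θ: X → Y be a surjection such that θ([x]_{E_n}) = [θ(x)]_{F_n} for all n < ω and x ∈ X. Then there exists a Lipschitz order preserving embedding ψ: T_ℱ^Y → T_ℰ^X. In particular, if T_ℰ^X is well-founded, then so is T_ℱ^Y, and ρ(T_ℱ^Y) ≤ ρ(T_ℰ^X). -/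
noncomputable section

private lemma relLE {Z : Type} {F : ℕ → Z → Z → Prop}
    (hdec : ∀ n x y, F (n + 1) x y → F n x y) :
    ∀ k n : ℕ, k ≤ n → ∀ x y : Z, F n x y → F k x y := by
  intro k n h
  induction h with
  | refl => exact fun x y h => h
  | step _ ih => exact fun x y hxy => ih x y (hdec _ _ _ hxy)

private lemma lh_node {X : Type} {E : ℕ → X → X → Prop} (hE : ∀ n, Equivalence (E n))
    (hEdec : ∀ n x y, E (n + 1) x y → E n x y) (s : TreeNode X E) :
    lh (nodeLT E) s = s.1.1 := by
  obtain ⟨⟨n, C⟩, hs⟩ := s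
  obtain ⟨x, hC, hne⟩ := hs
  have hC' : C = {y | E n x y} := hC
  subst hC' 
  have hxx : x ∈ {y | E n x y} := (hE n).refl x
  have hz : ∃ z, E n x z ∧ z ≠ x := by
    by_contra h
    push_neg at h
    apply hne
    ext w
    exact ⟨fun hw => h w hw, fun hw => by rw [Set.mem_singleton_iff] at hw; subst hw; exact hxx⟩
  obtain ⟨z, hz1, hz2⟩ := hz
  have hι : ∃ ι : Fin n → TreeNode X E,
      ∀ k : Fin n, ι k = ⟨((k : ℕ), {y | E (k : ℕ) x y}), x, rfl,
        fun hk => hz2 (by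
          have h1 : z ∈ (((k : ℕ), {y | E (k : ℕ) x y}) : ℕ × Set X).2 :=
            relLE hEdec (k : ℕ) n k.2.le x z hz1
          rw [hk] at h1
          exact h1)⟩ := ⟨_, fun k => rfl⟩
  obtain ⟨ι, hι⟩ := hι
  have hinj : Function.Injective ι := by
    intro a b hab
    have h1 : (ι a).1.1 = (ι b).1.1 := by rw [hab]
    rw [hι a, hι b] at h1
    exact Fin.val_injective h1
  have hset : {t | nodeLT E t ⟨(n, {y | E n x y}), x, rfl, hne⟩} = Set.range ι := by
    ext t
    constructor
    · intro ht
      obtain ⟨hlt, hsub⟩ := ht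
      obtain ⟨⟨k, D⟩, x', hD, hne'⟩ := t
      refine ⟨⟨k, hlt⟩, ?_⟩
      apply Subtype.ext
      rw [congrArg Subtype.val (hι ⟨k, hlt⟩)]
      have hD2 : D = {y | E k x' y} := hD
      have hx' : E k x' x := by
        have hxm : x ∈ D := hsub hxx
        rw [hD2] at hxm
        exact hxm
      have hDeq : ({y | E ((⟨k, hlt⟩ : Fin n) : ℕ) x y} : Set X) = D := by
        rw [hD2]
        ext w
        exact ⟨fun hw => (hE k).trans hx' hw, fun hw => (hE k).trans ((hE k).symm hx') hw⟩
      exact Prod.ext rfl hDeq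
    · rintro ⟨k, rfl⟩
      rw [hι k]
      exact ⟨k.2, fun w hw => relLE hEdec (k : ℕ) n k.2.le x w hw⟩
  show Nat.card {t | nodeLT E t ⟨(n, {y | E n x y}), x, rfl, hne⟩} = n
  rw [hset, Nat.card_range_of_injective hinj, Nat.card_eq_fintype_card, Fintype.card_fin]

open Classical in
private noncomputable def gSeq {X Y : Type} (θ : X → Y) (E : ℕ → X → X → Prop)
    (F : ℕ → Y → Y → Prop) (x₀ : X) (σ : Y → X) (rep : ℕ → Y → Y)
    (hex : ∀ (n : ℕ) (a : X) (r : Y), F n (θ a) r → ∃ x, E n a x ∧ θ x = r) :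
    ℕ → Y → X
  | 0, y => σ (rep 0 y)
  | (n + 1), y =>
      if h : F n (θ (gSeq θ E F x₀ σ rep hex n y)) (rep (n + 1) y) then
        Classical.choose (hex n _ _ h)
      else x₀

private lemma exists_g {X Y : Type} (E : ℕ → X → X → Prop) (F : ℕ → Y → Y → Prop)
    (hF : ∀ n, Equivalence (F n)) (hFdec : ∀ n x y, F (n + 1) x y → F n x y)
    (θ : X → Y) (x₀ : X) (σ : Y → X) (hσ : ∀ y, θ (σ y) = y)
    (rep : ℕ → Y → Y) (hrep : ∀ n y, F n y (rep n y))
    (hrepc : ∀ n y y', F n y y' → rep n y = rep n y')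
    (hex : ∀ (n : ℕ) (a : X) (r : Y), F n (θ a) r → ∃ x, E n a x ∧ θ x = r) :
    ∃ g : ℕ → Y → X, (∀ n y, θ (g n y) = rep n y) ∧
      (∀ n y, E n (g n y) (g (n + 1) y)) ∧
      (∀ n y y', F n y y' → g n y = g n y') := by
  classical
  have hg1 : ∀ n y, θ (gSeq θ E F x₀ σ rep hex n y) = rep n y := by
    intro n
    induction n with
    | zero => intro y; simp only [gSeq]; exact hσ _
    | succ n ih =>
      intro y
      have hc : F n (θ (gSeq θ E F x₀ σ rep hex n y)) (rep (n + 1) y) := by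
        rw [ih y]
        exact (hF n).trans ((hF n).symm (hrep n y)) (hFdec n _ _ (hrep (n + 1) y))
      simp only [gSeq]
      rw [dif_pos hc]
      exact (Classical.choose_spec (hex n _ _ hc)).2
  have hc : ∀ n y, F n (θ (gSeq θ E F x₀ σ rep hex n y)) (rep (n + 1) y) := by
    intro n y
    rw [hg1 n y]
    exact (hF n).trans ((hF n).symm (hrep n y)) (hFdec n _ _ (hrep (n + 1) y))
  refine ⟨gSeq θ E F x₀ σ rep hex, hg1, ?_, ?_⟩
  · intro n y
    have hcny := hc n y
    conv_rhs => simp only [gSeq]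
    rw [dif_pos hcny]
    exact (Classical.choose_spec (hex n _ _ hcny)).1
  · intro n
    induction n with
    | zero =>
      intro y y' h
      simp only [gSeq]
      rw [hrepc 0 y y' h]
    | succ n ih =>
      intro y y' h
      have h' : F n y y' := hFdec n _ _ h
      have e1 : gSeq θ E F x₀ σ rep hex n y = gSeq θ E F x₀ σ rep hex n y' := ih y y' h'
      have e2 : rep (n + 1) y = rep (n + 1) y' := hrepc _ _ _ h
      simp only [gSeq]
      have key : ∀ (a a' : X) (r r' : Y), a = a' → r = r' →
          (if h : F n (θ a) r then Classical.choose (hex n a r h) else x₀) =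
          (if h : F n (θ a') r' then Classical.choose (hex n a' r' h) else x₀) := by
        intro a a' r r' ha hr
        subst ha
        subst hr
        rfl
      exact key _ _ _ _ e1 e2

theorem statement_15 (X Y : Type) (E : ℕ → X → X → Prop) (F : ℕ → Y → Y → Prop)
    (hE : ∀ n, Equivalence (E n)) (hF : ∀ n, Equivalence (F n))
    (hEdec : ∀ n x y, E (n + 1) x y → E n x y) (hFdec : ∀ n x y, F (n + 1) x y → F n x y)
    (θ : X → Y) (hsurj : Function.Surjective θ)
    (hclass : ∀ (n : ℕ) (x : X), θ '' {y | E n x y} = {y | F n (θ x) y}) :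
    ∃ ψ : TreeNode Y F → TreeNode X E,
      Function.Injective ψ ∧
      (∀ s t, nodeLT F s t ↔ nodeLT E (ψ s) (ψ t)) ∧
      (∀ s, lh (nodeLT E) (ψ s) = lh (nodeLT F) s) ∧
      (TreeWF X E → TreeWF Y F ∧ treeRho Y F ≤ treeRho X E) := by
  classical
  cases isEmpty_or_nonempty Y with
  | inl hY =>
    have hTF : IsEmpty (TreeNode Y F) := ⟨fun s => hY.false (Classical.choose s.2)⟩
    refine ⟨fun s => (hTF.false s).elim, fun a b _ => (hTF.false a).elim,
      fun s _ => (hTF.false s).elim, fun s => (hTF.false s).elim, fun _ => ?_⟩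
    have hwfF : TreeWF Y F := ⟨fun a => (hTF.false a).elim⟩
    refine ⟨hwfF, ?_⟩
    have hwfF' : WellFounded (Function.swap (nodeLT F)) := hwfF
    have h0 : treeRho Y F = 0 := by
      unfold treeRho rhoRel
      rw [dif_pos hwfF']
      exact ciSup_of_empty _
    rw [h0]
    exact zero_le
  | inr hY =>
    have y₀ : Y := Classical.arbitrary Y
    obtain ⟨x₀, -⟩ := hsurj y₀
    obtain ⟨rep, hrep, hrepc⟩ :
        ∃ rep : ℕ → Y → Y, (∀ n y, F n y (rep n y)) ∧
          (∀ n y y', F n y y' → rep n y = rep n y') := by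
      refine ⟨fun n y => Classical.epsilon (· ∈ {y' | F n y y'}),
        fun n y => Classical.epsilon_spec ⟨y, (hF n).refl y⟩, fun n y y' h => ?_⟩
      have hset : {z | F n y z} = {z | F n y' z} :=
        Set.ext fun z => ⟨fun hz => (hF n).trans ((hF n).symm h) hz,
          fun hz => (hF n).trans h hz⟩
      simp only [hset]
    have hex : ∀ (n : ℕ) (a : X) (r : Y), F n (θ a) r → ∃ x, E n a x ∧ θ x = r := by
      intro n a r h
      have h2 : r ∈ θ '' {x | E n a x} := by rw [hclass n a]; exact h
      obtain ⟨x, hx1, hx2⟩ := h2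
      exact ⟨x, hx1, hx2⟩
    obtain ⟨g, hg1, hg2, hg3⟩ := exists_g E F hF hFdec θ x₀
      (fun y => Classical.choose (hsurj y)) (fun y => Classical.choose_spec (hsurj y))
      rep hrep hrepc hex
    have hEle := relLE hEdec
    have hFle := relLE hFdec
    have hchain : ∀ (n m : ℕ), n ≤ m → ∀ y, E n (g n y) (g m y) := by
      intro n m h
      induction h with
      | refl => exact fun y => (hE n).refl _
      | @step m hm ih =>
        exact fun y => (hE n).trans (ih y) (hEle n m hm _ _ (hg2 m y))
    have himg : ∀ n y, θ '' {x | E n (g n y) x} = {y' | F n y y'} := by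
      intro n y
      rw [hclass n (g n y)]
      ext w
      simp only [Set.mem_setOf_eq]
      have hyr : F n y (θ (g n y)) := by rw [hg1 n y]; exact hrep n y
      exact ⟨fun hw => (hF n).trans hyr hw, fun hw => (hF n).trans ((hF n).symm hyr) hw⟩
    have hns : ∀ (n : ℕ) (y : Y), {y' | F n y y'} ≠ {y} → {x | E n (g n y) x} ≠ {g n y} := by
      intro n y hCne heq
      apply hCne
      have h1 : θ '' {x | E n (g n y) x} = {θ (g n y)} := by rw [heq, Set.image_singleton]
      rw [himg n y] at h1
      have hy : y ∈ {y' | F n y y'} := (hF n).refl y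
      have hyθ : y = θ (g n y) := by rw [h1] at hy; exact hy
      rw [h1, ← hyθ]
    choose ysel hy1 hy2 using fun s : TreeNode Y F => s.2
    obtain ⟨ψ, hψ⟩ : ∃ ψ : TreeNode Y F → TreeNode X E,
        ∀ s, ψ s = ⟨(s.1.1, {x | E s.1.1 (g s.1.1 (ysel s)) x}),
          g s.1.1 (ysel s), rfl, hns _ _ (hy1 s ▸ hy2 s)⟩ := ⟨_, fun s => rfl⟩
    have hψ1 : ∀ s, (ψ s).1.1 = s.1.1 := fun s => by rw [hψ s]
    have hψ2 : ∀ s, (ψ s).1.2 = {x | E s.1.1 (g s.1.1 (ysel s)) x} := fun s => by rw [hψ s]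
    have key1 : ∀ s, θ '' (ψ s).1.2 = s.1.2 := by
      intro s
      rw [hψ2 s, himg, ← hy1 s]
    have hiff : ∀ s t, nodeLT F s t ↔ nodeLT E (ψ s) (ψ t) := by
      intro s t
      constructor
      · rintro ⟨hlt, hsub⟩
        refine ⟨by rw [hψ1 s, hψ1 t]; exact hlt, ?_⟩
        rw [hψ2 s, hψ2 t]
        have hyF : F s.1.1 (ysel s) (ysel t) := by
          have h1 : ysel t ∈ t.1.2 := by rw [hy1 t]; exact (hF _).refl _
          have h2 : ysel t ∈ s.1.2 := hsub h1
          rw [hy1 s] at h2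
          exact h2
        have hgeq : g s.1.1 (ysel s) = g s.1.1 (ysel t) := hg3 _ _ _ hyF
        intro x hx
        have hx' : E s.1.1 (g t.1.1 (ysel t)) x := hEle _ _ hlt.le _ _ hx
        have hch : E s.1.1 (g s.1.1 (ysel t)) (g t.1.1 (ysel t)) :=
          hchain _ _ hlt.le (ysel t)
        show E s.1.1 (g s.1.1 (ysel s)) x
        rw [hgeq]
        exact (hE _).trans hch hx'
      · rintro ⟨hlt, hsub⟩
        rw [hψ1 s, hψ1 t] at hlt
        refine ⟨hlt, ?_⟩
        rw [← key1 s, ← key1 t]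
        exact Set.image_mono hsub
    have hinj : Function.Injective ψ := by
      intro s t h
      have h1 : s.1.1 = t.1.1 := by rw [← hψ1 s, ← hψ1 t, h]
      have h3 : s.1.2 = t.1.2 := by rw [← key1 s, ← key1 t, h]
      exact Subtype.ext (Prod.ext h1 h3)
    refine ⟨ψ, hinj, hiff, fun s => ?_, fun hwfE => ?_⟩
    · rw [lh_node hE hEdec (ψ s), lh_node hF hFdec s, hψ1 s]
    · have hwfF : TreeWF Y F := by
        refine Subrelation.wf (r := InvImage (Function.swap (nodeLT E)) ψ)
          (fun {a b} h => (hiff b a).1 h) (InvImage.wf ψ hwfE)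
      refine ⟨hwfF, ?_⟩
      have hrank : ∀ s, (hwfF.apply s).rank ≤ (hwfE.apply (ψ s)).rank := by
        intro s
        induction s using hwfF.induction with
        | _ s IH =>
          rw [Acc.rank_eq (hwfF.apply s)]
          refine Ordinal.iSup_le ?_
          rintro ⟨b, hb⟩
          have h1 : nodeLT E (ψ s) (ψ b) := (hiff s b).1 hb
          have h2 : (hwfE.apply (ψ b)).rank < (hwfE.apply (ψ s)).rank := (hwfE.apply (ψ s)).rank_lt_of_rel h1
          exact le_trans (Order.succ_le_succ (IH b hb)) (Order.succ_le_of_lt h2)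
      have hwfF' : WellFounded (Function.swap (nodeLT F)) := hwfF
      have hwfE' : WellFounded (Function.swap (nodeLT E)) := hwfE
      show rhoRel (nodeLT F) ≤ rhoRel (nodeLT E)
      unfold rhoRel
      rw [dif_pos hwfF', dif_pos hwfE']
      refine Ordinal.iSup_le fun s => ?_
      exact le_trans (Order.succ_le_succ (hrank s))
        (Ordinal.le_iSup (fun t => Order.succ (hwfE.apply t).rank) (ψ s))

end
end
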